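/- Let M₁ = ℤ[x, x^{-1}, f_1^{-1}, ..., f_n^{-1}] ⊆ ℚ(x), where f_1, ..., f_n are distinct irreducible monic non-constant polynomials in ℤ[x], and let v = v_i be the f_i-adic valuation on ℚ(x) for some 0 ≤ i ≤ n (with f_0 = x). Then the set {m ∈ M₁ : v(m) ≥ 0} equals the ℤ-subalgebra of M₁ generated by the monomials x^{a_0} f_1^{a_1} ⋯ f_n^{a_n} with a_i ≥ 0 (a_j ∈ ℤ arbitrary for j ≠ i). -/

import Mathlib

open scoped Classical

/-- The image of an integer polynomial in the field of rational functions `ℚ(x)`. -/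
noncomputable def toRF (g : Polynomial ℤ) : RatFunc ℚ :=
  algebraMap (Polynomial ℚ) (RatFunc ℚ) (g.map (Int.castRingHom ℚ))

namespace Stmt6Aux

open Polynomial

noncomputable def φ : Polynomial ℤ →+* RatFunc ℚ :=
  (algebraMap (Polynomial ℚ) (RatFunc ℚ)).comp (mapRingHom (Int.castRingHom ℚ))

lemma toRF_eq (g : Polynomial ℤ) : toRF g = φ g := rfl

lemma φ_ne_zero {g : Polynomial ℤ} (hg : g ≠ 0) : φ g ≠ 0 := by
  have h1 : g.map (Int.castRingHom ℚ) ≠ 0 := by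
    simpa using (Polynomial.map_ne_zero_iff (f := Int.castRingHom ℚ)
      (Int.cast_injective)).2 hg
  simpa [φ] using
    (map_ne_zero_iff _ (IsFractionRing.injective (Polynomial ℚ) (RatFunc ℚ))).2 h1

section V
variable (v : RatFunc ℚ → WithTop ℤ)
  (hv0 : v 0 = ⊤)
  (hvQ : ∀ c : ℚ, c ≠ 0 → v (algebraMap ℚ (RatFunc ℚ) c) = 0)
  (hvmul : ∀ a b, v (a * b) = v a + v b)
  (hvadd : ∀ a b, min (v a) (v b) ≤ v (a + b))

include hv0 hvQ hvmul hvadd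
set_option linter.unusedSectionVars false

lemma v_one : v 1 = 0 := by
  have := hvQ 1 one_ne_zero; simpa using this

lemma v_ne_top {z : RatFunc ℚ} (hz : z ≠ 0) : v z ≠ ⊤ := by
  intro h
  have h1 : v (z * z⁻¹) = v z + v z⁻¹ := hvmul z z⁻¹
  rw [mul_inv_cancel₀ hz, v_one v hv0 hvQ hvmul hvadd, h, top_add] at h1
  exact (by simp : (0 : WithTop ℤ) ≠ ⊤) h1

lemma v_neg (z : RatFunc ℚ) : v (-z) = v z := by
  have hm1 : v (-1) = 0 := by
    have := hvQ (-1) (by norm_num)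
    simpa using this
  have := hvmul (-1) z
  simpa [hm1] using this

lemma v_ultra {a b : RatFunc ℚ} (h : v a < v b) : v (a + b) = v a := by
  have h1 : v a ≤ v (a + b) := by simpa [min_eq_left h.le] using hvadd a b
  rcases h1.lt_or_eq with h2 | h2
  · exfalso
    have h3 : min (v (a + b)) (v (-b)) ≤ v (a + b + -b) := hvadd _ _
    rw [add_neg_cancel_right, v_neg v hv0 hvQ hvmul hvadd] at h3
    have : v a < min (v (a + b)) (v b) := lt_min h2 h
    exact absurd h3 (not_le.2 this)
  · exact h2.symm

lemma v_sum {ι : Type*} (s : Finset ι) (g : ι → RatFunc ℚ) (c : WithTop ℤ)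
    (h : ∀ j ∈ s, c ≤ v (g j)) : c ≤ v (∑ j ∈ s, g j) := by
  classical
  induction s using Finset.induction_on with
  | empty => simp [hv0]
  | @insert a s' hx ih =>
    rw [Finset.sum_insert hx]
    refine le_trans (le_min (h a (by simp)) (ih fun j hj => h j (by simp [hj]))) (hvadd _ _)

lemma v_pow (z : RatFunc ℚ) (t : ℤ) (hz : v z = t) (k : ℕ) :
    v (z ^ k) = ((k * t : ℤ) : WithTop ℤ) := by
  induction k with
  | zero => simpa using v_one v hv0 hvQ hvmul hvadd
  | succ k ih =>
    have := hvmul z (z ^ k)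
    rw [← pow_succ'] at this
    rw [this, hz, ih, ← WithTop.coe_add]
    congr 1
    push_cast
    ring

lemma v_inv {z : RatFunc ℚ} (hz : z ≠ 0) (t : ℤ) (h : v z = t) :
    v z⁻¹ = ((-t : ℤ) : WithTop ℤ) := by
  have h1 : v (z * z⁻¹) = v z + v z⁻¹ := hvmul z z⁻¹
  rw [mul_inv_cancel₀ hz, v_one v hv0 hvQ hvmul hvadd, h] at h1
  have h2 : v z⁻¹ ≠ ⊤ := v_ne_top v hv0 hvQ hvmul hvadd (inv_ne_zero hz)
  obtain ⟨s, hs⟩ := WithTop.ne_top_iff_exists.1 h2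
  rw [← hs] at h1 ⊢
  have h3 : (0 : ℤ) = t + s := by exact_mod_cast h1
  rw [show -t = s by omega]

lemma v_zpow {z : RatFunc ℚ} (hz : z ≠ 0) (t : ℤ) (h : v z = t) (a : ℤ) :
    v (z ^ a) = ((a * t : ℤ) : WithTop ℤ) := by
  rcases a with k | k
  · rw [Int.ofNat_eq_coe, zpow_natCast]
    simpa using v_pow v hv0 hvQ hvmul hvadd z t h k
  · rw [zpow_negSucc]
    have hp := v_pow v hv0 hvQ hvmul hvadd z t h (k + 1)
    rw [v_inv v hv0 hvQ hvmul hvadd (pow_ne_zero _ hz) _ hp]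
    congr 1
    rw [Int.negSucc_eq]
    push_cast
    ring

lemma v_prod {ι : Type*} (s : Finset ι) (g : ι → RatFunc ℚ) (c : ι → ℤ)
    (h : ∀ j ∈ s, v (g j) = ((c j : ℤ) : WithTop ℤ)) :
    v (∏ j ∈ s, g j) = ((∑ j ∈ s, c j : ℤ) : WithTop ℤ) := by
  classical
  induction s using Finset.induction_on with
  | empty => simpa using v_one v hv0 hvQ hvmul hvadd
  | @insert a s' hx ih =>
    rw [Finset.prod_insert hx, Finset.sum_insert hx, hvmul,
      h a (by simp), ih fun j hj => h j (by simp [hj]), ← WithTop.coe_add]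

lemma v_polyQ (t : ℤ) (hx : v (algebraMap (Polynomial ℚ) (RatFunc ℚ) X) = t)
    (q : Polynomial ℚ) (c : ℤ)
    (hc : ∀ k : ℕ, k ≤ q.natDegree → c ≤ (k : ℤ) * t) :
    (c : WithTop ℤ) ≤ v (algebraMap (Polynomial ℚ) (RatFunc ℚ) q) := by
  by_cases hq : q = 0
  · rw [hq, map_zero, hv0]; exact le_top
  · conv_rhs => rw [q.as_sum_support]
    rw [map_sum]
    apply v_sum v hv0 hvQ hvmul hvadd
    intro k hk
    rw [← Polynomial.C_mul_X_pow_eq_monomial, map_mul, map_pow, hvmul,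
      v_pow v hv0 hvQ hvmul hvadd _ t hx k]
    have hco : q.coeff k ≠ 0 := Polynomial.mem_support_iff.1 hk
    have h1 : v (algebraMap (Polynomial ℚ) (RatFunc ℚ) (C (q.coeff k))) = 0 := by
      rw [show algebraMap (Polynomial ℚ) (RatFunc ℚ) (C (q.coeff k))
          = algebraMap ℚ (RatFunc ℚ) (q.coeff k) from
        (IsScalarTower.algebraMap_apply ℚ (Polynomial ℚ) (RatFunc ℚ) _).symm]
      exact hvQ _ hco
    rw [h1, zero_add]
    exact_mod_cast hc k (Polynomial.le_natDegree_of_mem_supp k hk)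

lemma v_X_nonneg (g : Polynomial ℚ) (hmo : g.Monic) (hd : 0 < g.natDegree)
    (hvg : v (algebraMap (Polynomial ℚ) (RatFunc ℚ) g) = 1) :
    0 ≤ v (algebraMap (Polynomial ℚ) (RatFunc ℚ) X) := by
  set A := algebraMap (Polynomial ℚ) (RatFunc ℚ) with hA
  have hXne : A X ≠ 0 := by
    rw [map_ne_zero_iff _ (IsFractionRing.injective (Polynomial ℚ) (RatFunc ℚ))]
    exact Polynomial.X_ne_zero
  obtain ⟨t, ht⟩ := WithTop.ne_top_iff_exists.1 (v_ne_top v hv0 hvQ hvmul hvadd hXne)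
  rw [← ht]
  by_contra hneg
  have htneg : t < 0 := by exact_mod_cast not_le.1 hneg
  set d := g.natDegree with hdd
  have hghi : v (A (X ^ d)) = ((d : ℤ) * t : ℤ) := by
    rw [map_pow]; exact v_pow v hv0 hvQ hvmul hvadd _ t ht.symm d
  have hkey : v (A g) = ((d : ℤ) * t : ℤ) := by
    by_cases hr : g - X ^ d = 0
    · rw [sub_eq_zero] at hr
      rw [hr]; exact hghi
    · have hdeg : (g - X ^ d).degree < g.degree :=
        Polynomial.degree_sub_lt
          (by rw [Polynomial.degree_X_pow, Polynomial.degree_eq_natDegree hmo.ne_zero])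
          hmo.ne_zero
          (by rw [hmo.leadingCoeff, Polynomial.leadingCoeff_X_pow])
      have hnd : (g - X ^ d).natDegree ≤ d - 1 := by
        have := Polynomial.natDegree_lt_natDegree hr hdeg
        omega
      have hlow : (((d : ℤ) - 1) * t : ℤ) ≤ v (A (g - X ^ d)) := by
        apply v_polyQ v hv0 hvQ hvmul hvadd t ht.symm
        intro k hk
        have hk1 : (k : ℤ) ≤ (d : ℤ) - 1 := by
          have := le_trans hk hnd
          omega
        nlinarith
      have hlt : v (A (X ^ d)) < v (A (g - X ^ d)) := by
        rw [hghi]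
        refine lt_of_lt_of_le ?_ hlow
        rw [WithTop.coe_lt_coe]
        nlinarith
      have := v_ultra v hv0 hvQ hvmul hvadd hlt
      rw [← map_add, add_sub_cancel] at this  -- X^d + (g - X^d) = g
      rw [this, hghi]
  rw [hvg] at hkey
  have : (1 : ℤ) = (d : ℤ) * t := by exact_mod_cast hkey
  nlinarith [hd]

lemma v_poly_nonneg (hx : 0 ≤ v (algebraMap (Polynomial ℚ) (RatFunc ℚ) X))
    (q : Polynomial ℚ) : 0 ≤ v (algebraMap (Polynomial ℚ) (RatFunc ℚ) q) := by
  obtain ⟨t, ht⟩ : ∃ t : ℤ, v (algebraMap (Polynomial ℚ) (RatFunc ℚ) X) = t := by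
    by_cases hX : v (algebraMap (Polynomial ℚ) (RatFunc ℚ) X) = ⊤
    · exact absurd hX (v_ne_top v hv0 hvQ hvmul hvadd (by
        rw [map_ne_zero_iff _ (IsFractionRing.injective (Polynomial ℚ) (RatFunc ℚ))]
        exact Polynomial.X_ne_zero))
    · obtain ⟨t, ht⟩ := WithTop.ne_top_iff_exists.1 hX; exact ⟨t, ht.symm⟩
  have ht0 : 0 ≤ t := by rw [ht] at hx; exact_mod_cast hx
  exact_mod_cast v_polyQ v hv0 hvQ hvmul hvadd t ht q 0 (fun k _ => by positivity)

lemma v_nonpos_of_coprime (hx : 0 ≤ v (algebraMap (Polynomial ℚ) (RatFunc ℚ) X))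
    {p q : Polynomial ℚ} (h : IsCoprime p q)
    (hq : (0 : WithTop ℤ) < v (algebraMap (Polynomial ℚ) (RatFunc ℚ) q)) :
    v (algebraMap (Polynomial ℚ) (RatFunc ℚ) p) ≤ 0 := by
  set A := algebraMap (Polynomial ℚ) (RatFunc ℚ) with hA
  by_contra h0
  have hp : (0 : WithTop ℤ) < v (A p) := not_le.1 h0
  obtain ⟨u, w, huw⟩ := h
  have h1 : min (v (A (u * p))) (v (A (w * q))) ≤ v (A (u * p) + A (w * q)) := hvadd _ _
  rw [← map_add, huw, map_one, v_one v hv0 hvQ hvmul hvadd] at h1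
  have h2 : (0 : WithTop ℤ) < v (A (u * p)) := by
    rw [map_mul, hvmul]
    exact lt_of_lt_of_le hp (le_add_of_nonneg_left (v_poly_nonneg v hv0 hvQ hvmul hvadd hx u))
  have h3 : (0 : WithTop ℤ) < v (A (w * q)) := by
    rw [map_mul, hvmul]
    exact lt_of_lt_of_le hq (le_add_of_nonneg_left (v_poly_nonneg v hv0 hvQ hvmul hvadd hx w))
  exact absurd h1 (not_le.2 (lt_min h2 h3))

lemma pow_dvd_of_v (hx : 0 ≤ v (algebraMap (Polynomial ℚ) (RatFunc ℚ) X))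
    {g : Polynomial ℚ} (hgI : Irreducible g)
    (hvg : v (algebraMap (Polynomial ℚ) (RatFunc ℚ) g) = 1) :
    ∀ (k : ℕ) (P : Polynomial ℚ), P ≠ 0 →
      ((k : ℤ) : WithTop ℤ) ≤ v (algebraMap (Polynomial ℚ) (RatFunc ℚ) P) → g ^ k ∣ P := by
  set A := algebraMap (Polynomial ℚ) (RatFunc ℚ) with hA
  intro k
  induction k with
  | zero => intro P _ _; simpa using one_dvd P
  | succ k ih =>
    intro P hP hle
    have hdvd : g ∣ P := by
      by_contra hnd
      have hcop : IsCoprime g P := hgI.coprime_iff_not_dvd.2 hnd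
      have := v_nonpos_of_coprime v hv0 hvQ hvmul hvadd hx hcop.symm (by rw [hvg]; norm_num)
      have h1 : (((k : ℤ) + 1 : ℤ) : WithTop ℤ) ≤ 0 := le_trans (by exact_mod_cast hle) this
      have : ((k : ℤ) + 1 : ℤ) ≤ 0 := by exact_mod_cast h1
      omega
    obtain ⟨Q, hQ⟩ := hdvd
    have hQne : Q ≠ 0 := by rintro rfl; simp at hQ; exact hP hQ
    have hvP : v (A P) = 1 + v (A Q) := by rw [hQ, map_mul, hvmul, hvg]
    obtain ⟨s, hs⟩ := WithTop.ne_top_iff_exists.1 (v_ne_top v hv0 hvQ hvmul hvadd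
      (show A Q ≠ 0 by
        rw [map_ne_zero_iff _ (IsFractionRing.injective (Polynomial ℚ) (RatFunc ℚ))]
        exact hQne))
    have hks : ((k : ℤ) : WithTop ℤ) ≤ v (A Q) := by
      rw [← hs]
      rw [hvP, ← hs] at hle
      have : ((k : ℤ) + 1 : ℤ) ≤ 1 + s := by exact_mod_cast hle
      exact_mod_cast by omega
    obtain ⟨T, hT⟩ := ih Q hQne hks
    exact ⟨T, by rw [hQ, hT, pow_succ]; ring⟩

end V


lemma phiX_mem (n : ℕ) (f : Fin (n + 1) → Polynomial ℤ) (hf0 : f 0 = Polynomial.X)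
    (i : Fin (n + 1)) :
    φ X ∈ Subring.closure (Set.range
      fun a : {a : Fin (n + 1) → ℤ // 0 ≤ a i} => ∏ j, toRF (f j) ^ a.1 j) := by
  have he : ∀ hi : (0 : ℤ) ≤ (fun j => if j = 0 then (1 : ℤ) else 0) i,
      (∏ j, toRF (f j) ^ (if j = (0 : Fin (n+1)) then (1:ℤ) else 0)) = φ X := by
    intro _
    have : ∀ j : Fin (n + 1), toRF (f j) ^ (if j = (0 : Fin (n+1)) then (1:ℤ) else 0)
        = if j = 0 then φ (f 0) else 1 := by
      intro j
      by_cases hj : j = 0 <;> simp [hj, toRF_eq]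
    rw [Finset.prod_congr rfl fun j _ => this j, Finset.prod_ite_eq']
    simp [hf0]
  have hi : (0 : ℤ) ≤ (fun j => if j = 0 then (1 : ℤ) else 0) i := by
    by_cases h : i = 0 <;> simp [h]
  rw [← he hi]
  exact Subring.subset_closure ⟨⟨fun j => if j = 0 then 1 else 0, hi⟩, rfl⟩

lemma phi_poly_mem (n : ℕ) (f : Fin (n + 1) → Polynomial ℤ) (hf0 : f 0 = Polynomial.X)
    (i : Fin (n + 1)) (Q : Polynomial ℤ) :
    φ Q ∈ Subring.closure (Set.range
      fun a : {a : Fin (n + 1) → ℤ // 0 ≤ a i} => ∏ j, toRF (f j) ^ a.1 j) := by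
  induction Q using Polynomial.induction_on with
  | C a =>
    rw [show (C a : Polynomial ℤ) = ((a : ℤ) : Polynomial ℤ) from Polynomial.C_eq_intCast a,
      map_intCast]
    exact intCast_mem _ a
  | add p q hp hq => rw [map_add]; exact add_mem hp hq
  | monomial k a ih =>
    rw [pow_succ, ← mul_assoc, map_mul]
    exact mul_mem ih (phiX_mem n f hf0 i)

end Stmt6Aux


open Polynomial Stmt6Aux

/-- with `M₁ = ℤ[x, x⁻¹, f₁⁻¹, …, fₙ⁻¹] ⊆ ℚ(x)` (the `fⱼ` distinct
irreducible monic non-constant integer polynomials, `f₀ = x`) and `v` the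
`fᵢ`-adic valuation on `ℚ(x)`, the set `{m ∈ M₁ : v m ≥ 0}` equals the subring
generated by the monomials `x^{a₀} f₁^{a₁} ⋯ fₙ^{aₙ}` with `aᵢ ≥ 0`. -/
theorem stmt6 (n : ℕ) (f : Fin (n + 1) → Polynomial ℤ)
    (hf0 : f 0 = Polynomial.X)
    (hinj : Function.Injective f)
    (hirr : ∀ j, Irreducible (f j))
    (hmonic : ∀ j, (f j).Monic)
    (hdeg : ∀ j, 0 < (f j).natDegree)
    (i : Fin (n + 1))
    (v : RatFunc ℚ → WithTop ℤ)
    (hv0 : v 0 = ⊤)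
    (hvQ : ∀ c : ℚ, c ≠ 0 → v (algebraMap ℚ (RatFunc ℚ) c) = 0)
    (hvmul : ∀ a b, v (a * b) = v a + v b)
    (hvadd : ∀ a b, min (v a) (v b) ≤ v (a + b))
    (hvf : v (toRF (f i)) = 1) :
    {m : RatFunc ℚ |
        m ∈ Subring.closure (Set.range fun a : Fin (n + 1) → ℤ => ∏ j, toRF (f j) ^ a j) ∧
        0 ≤ v m} =
      (Subring.closure (Set.range
        fun a : {a : Fin (n + 1) → ℤ // 0 ≤ a i} => ∏ j, toRF (f j) ^ a.1 j) : Set (RatFunc ℚ)) := by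
  classical
  set A := algebraMap (Polynomial ℚ) (RatFunc ℚ) with hA
  set F : Fin (n + 1) → Polynomial ℚ := fun j => (f j).map (Int.castRingHom ℚ) with hF
  have hFmonic : ∀ j, (F j).Monic := fun j => (hmonic j).map _
  have hfne : ∀ j, f j ≠ 0 := fun j => (hirr j).ne_zero
  have hφne : ∀ j, φ (f j) ≠ 0 := fun j => φ_ne_zero (hfne j)
  have htoRF : ∀ j, toRF (f j) = A (F j) := fun j => rfl
  have htoRFφ : ∀ j, toRF (f j) = φ (f j) := fun j => rfl
  have hvgi : v (A (F i)) = 1 := hvf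
  have hFirr : ∀ j, Irreducible (F j) := by
    intro j
    have h := ((hmonic j).irreducible_iff_irreducible_map_fraction_map (K := ℚ)).1 (hirr j)
    rwa [algebraMap_int_eq] at h
  have hx : 0 ≤ v (A X) := by
    refine v_X_nonneg v hv0 hvQ hvmul hvadd (F i) (hFmonic i) ?_ hvgi
    rw [(hmonic i).natDegree_map]
    exact hdeg i
  -- values of v on the F j
  have hvFj : ∀ j, v (A (F j)) = ((if j = i then (1 : ℤ) else 0 : ℤ) : WithTop ℤ) := by
    intro j
    by_cases hj : j = i
    · simp [hj, hvgi]
    · simp only [hj, if_neg hj]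
      have hle : v (A (F j)) ≤ 0 := by
        refine v_nonpos_of_coprime v hv0 hvQ hvmul hvadd hx ?_ (by rw [hvgi]; norm_num)
        refine (hFirr j).coprime_iff_not_dvd.2 ?_
        intro hdvd
        have hass := (hFirr j).associated_of_dvd (hFirr i) hdvd
        have heq : F j = F i := Polynomial.eq_of_monic_of_associated (hFmonic j) (hFmonic i) hass
        have : f j = f i := Polynomial.map_injective _ Int.cast_injective heq
        exact hj (hinj this)
      exact le_antisymm hle (v_poly_nonneg v hv0 hvQ hvmul hvadd hx (F j))
  -- value of v on monomials (zpow)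
  have hvmono : ∀ a : Fin (n + 1) → ℤ, v (∏ j, toRF (f j) ^ a j) = ((a i : ℤ) : WithTop ℤ) := by
    intro a
    have := v_prod v hv0 hvQ hvmul hvadd Finset.univ (fun j => toRF (f j) ^ a j)
      (fun j => a j * (if j = i then 1 else 0)) (by
        intro j _
        show v (toRF (f j) ^ a j) = _
        rw [htoRFφ j]
        exact v_zpow v hv0 hvQ hvmul hvadd (hφne j) _ (hvFj j) (a j))
    rw [this]
    congr 1
    simp only [mul_ite, mul_one, mul_zero]
    rw [Finset.sum_ite_eq' Finset.univ i a]
    simp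
  -- value of v on monomials (npow)
  have hvmonoN : ∀ b : Fin (n + 1) → ℕ, v (∏ j, φ (f j) ^ b j) = ((b i : ℤ) : WithTop ℤ) := by
    intro b
    have := v_prod v hv0 hvQ hvmul hvadd Finset.univ (fun j => φ (f j) ^ b j)
      (fun j => (b j : ℤ) * (if j = i then 1 else 0)) (by
        intro j _
        show v (φ (f j) ^ b j) = _
        exact v_pow v hv0 hvQ hvmul hvadd (φ (f j)) _ (hvFj j) (b j))
    rw [this]
    congr 1
    simp only [mul_ite, mul_one, mul_zero]
    rw [Finset.sum_ite_eq' Finset.univ i (fun j => (b j : ℤ))]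
    simp
  have hDne : ∀ b : Fin (n + 1) → ℕ, (∏ j, φ (f j) ^ b j) ≠ 0 :=
    fun b => Finset.prod_ne_zero_iff.2 fun j _ => pow_ne_zero _ (hφne j)
  -- the subring of fractions P / ∏ f^b
  let T : Subring (RatFunc ℚ) :=
    { carrier := {z | ∃ (P : Polynomial ℤ) (b : Fin (n + 1) → ℕ),
        z * (∏ j, φ (f j) ^ b j) = φ P}
      one_mem' := ⟨1, 0, by simp⟩
      zero_mem' := ⟨0, 0, by simp⟩
      mul_mem' := by
        rintro a b ⟨P, bb, hP⟩ ⟨P', bb', hP'⟩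
        refine ⟨P * P', bb + bb', ?_⟩
        have : (∏ j, φ (f j) ^ (bb + bb') j) = (∏ j, φ (f j) ^ bb j) * ∏ j, φ (f j) ^ bb' j := by
          rw [← Finset.prod_mul_distrib]
          exact Finset.prod_congr rfl fun j _ => pow_add _ _ _
        rw [this, map_mul]
        linear_combination hP * (b * ∏ j, φ (f j) ^ bb' j) + hP' * φ P
      add_mem' := by
        rintro a b ⟨P, bb, hP⟩ ⟨P', bb', hP'⟩
        refine ⟨P * ∏ j, f j ^ bb' j + P' * ∏ j, f j ^ bb j, bb + bb', ?_⟩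
        have hsplit : (∏ j, φ (f j) ^ (bb + bb') j)
            = (∏ j, φ (f j) ^ bb j) * ∏ j, φ (f j) ^ bb' j := by
          rw [← Finset.prod_mul_distrib]
          exact Finset.prod_congr rfl fun j _ => pow_add _ _ _
        have hφprod : ∀ c : Fin (n + 1) → ℕ, φ (∏ j, f j ^ c j) = ∏ j, φ (f j) ^ c j := by
          intro c
          rw [map_prod]
          exact Finset.prod_congr rfl fun j _ => map_pow _ _ _
        rw [hsplit, map_add, map_mul, map_mul, hφprod, hφprod]
        linear_combination hP * (∏ j, φ (f j) ^ bb' j) + hP' * (∏ j, φ (f j) ^ bb j)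
      neg_mem' := by
        rintro a ⟨P, bb, hP⟩
        exact ⟨-P, bb, by rw [neg_mul, hP, map_neg]⟩ }
  have hTgen : (Set.range fun a : Fin (n + 1) → ℤ => ∏ j, toRF (f j) ^ a j) ⊆ T := by
    rintro _ ⟨a, rfl⟩
    refine ⟨∏ j, f j ^ (a j).toNat, fun j => (-(a j)).toNat, ?_⟩
    have h1 : φ (∏ j, f j ^ (a j).toNat) = ∏ j, φ (f j) ^ (a j).toNat := by
      rw [map_prod]
      exact Finset.prod_congr rfl fun j _ => map_pow _ _ _
    rw [h1, ← Finset.prod_mul_distrib]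
    refine Finset.prod_congr rfl fun j _ => ?_
    rw [htoRFφ j, ← zpow_natCast (φ (f j)) ((-(a j)).toNat), ← zpow_add₀ (hφne j),
      ← zpow_natCast (φ (f j)) ((a j).toNat)]
    congr 1
    omega
  apply Set.Subset.antisymm
  · rintro m ⟨hm1, hm2⟩
    obtain ⟨P, b, hPb⟩ := Subring.closure_le.2 hTgen hm1
    by_cases hm0 : m = 0
    · rw [hm0]
      exact SetLike.mem_coe.2 (Subring.zero_mem _)
    have hφPne : φ P ≠ 0 := by rw [← hPb]; exact mul_ne_zero hm0 (hDne b)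
    have hpbar : φ P = A (P.map (Int.castRingHom ℚ)) := rfl
    have hpbarne : P.map (Int.castRingHom ℚ) ≠ 0 := by
      intro h
      apply hφPne
      rw [hpbar, h, map_zero]
    have hvP : (((b i : ℤ)) : WithTop ℤ) ≤ v (φ P) := by
      rw [← hPb, hvmul, hvmonoN b]
      exact le_add_of_nonneg_left hm2
    have hdvd : F i ^ b i ∣ P.map (Int.castRingHom ℚ) := by
      refine pow_dvd_of_v v hv0 hvQ hvmul hvadd hx (hFirr i) hvgi (b i) _ hpbarne ?_
      rw [← hpbar]
      exact_mod_cast hvP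
    have hdvdZ : f i ^ b i ∣ P := by
      rw [← Polynomial.map_dvd_map (Int.castRingHom ℚ) Int.cast_injective ((hmonic i).pow _)]
      rwa [Polynomial.map_pow]
    obtain ⟨Q, hPQ⟩ := hdvdZ
    set c : Fin (n + 1) → ℤ := fun j => (if j = i then (b i : ℤ) else 0) - (b j : ℤ) with hc
    have hci : 0 ≤ c i := by simp [hc]
    have hkey : (∏ j, toRF (f j) ^ c j) = φ (f i) ^ b i * (∏ j, φ (f j) ^ b j)⁻¹ := by
      have h1 : ∀ j, toRF (f j) ^ c j
          = (if j = i then φ (f i) ^ b i else 1) * (φ (f j) ^ b j)⁻¹ := by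
        intro j
        rw [htoRFφ j]
        simp only [hc]
        by_cases hj : j = i
        · subst hj
          rw [if_pos rfl, if_pos rfl, zpow_sub₀ (hφne j), zpow_natCast, div_eq_mul_inv]
        · rw [if_neg hj, if_neg hj, zero_sub, zpow_neg, zpow_natCast, one_mul]
      rw [Finset.prod_congr rfl fun j _ => h1 j, Finset.prod_mul_distrib,
        Finset.prod_ite_eq' Finset.univ i (fun _ => φ (f i) ^ b i),
        if_pos (Finset.mem_univ i)]
      congr 1
      exact Finset.prod_inv_distrib (fun j => φ (f j) ^ b j)
    have hm' : m = φ Q * ∏ j, toRF (f j) ^ c j := by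
      have h2 : m = φ P * (∏ j, φ (f j) ^ b j)⁻¹ := by
        rw [← hPb, mul_assoc, mul_inv_cancel₀ (hDne b), mul_one]
      rw [h2, hkey, hPQ, map_mul, map_pow]
      ring
    rw [hm']
    exact SetLike.mem_coe.2 (mul_mem (phi_poly_mem n f hf0 i Q)
      (Subring.subset_closure ⟨⟨c, hci⟩, rfl⟩))
  · intro m hm
    let S : Subring (RatFunc ℚ) :=
      { carrier := {m : RatFunc ℚ |
          m ∈ Subring.closure (Set.range fun a : Fin (n + 1) → ℤ => ∏ j, toRF (f j) ^ a j) ∧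
          0 ≤ v m}
        one_mem' := ⟨Subring.one_mem _, le_of_eq (v_one v hv0 hvQ hvmul hvadd).symm⟩
        zero_mem' := ⟨Subring.zero_mem _, by rw [hv0]; exact le_top⟩
        mul_mem' := by
          rintro a b ⟨ha1, ha2⟩ ⟨hb1, hb2⟩
          exact ⟨mul_mem ha1 hb1, by rw [hvmul]; exact add_nonneg ha2 hb2⟩
        add_mem' := by
          rintro a b ⟨ha1, ha2⟩ ⟨hb1, hb2⟩
          exact ⟨add_mem ha1 hb1, le_trans (le_min ha2 hb2) (hvadd a b)⟩
        neg_mem' := by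
          rintro a ⟨ha1, ha2⟩
          exact ⟨neg_mem ha1, by rw [v_neg v hv0 hvQ hvmul hvadd]; exact ha2⟩ }
    have hgen : (Set.range fun a : {a : Fin (n + 1) → ℤ // 0 ≤ a i} =>
        ∏ j, toRF (f j) ^ a.1 j) ⊆ S := by
      rintro _ ⟨a, rfl⟩
      exact ⟨Subring.subset_closure ⟨a.1, rfl⟩, by rw [hvmono a.1]; exact_mod_cast a.2⟩
    exact Subring.closure_le.2 hgen hm
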